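/- arXiv:2403.02465 — 4 statements merged into one kernel-verified Lean document; each statement's English description precedes it below -/
import Mathlib

section
/- If Σ is a complete generalized fan, i.e., every vector of V lies in the cone generated by some face, then there exist strictly positive real numbers λ_s such that the sum over all s in S of λ_s · ρ(s) equals zero. -/
/-- For a complete generalized fan Σ = (S, K, V, ρ) (every vector of V lies in
the cone generated by some face σ ∈ K), there exist strictly positive reals λ_s with
∑_{s ∈ S} λ_s • ρ(s) = 0. -/
theorem complete_fan_positive_relation
    {S : Type*} [Fintype S] {V : Type*} [AddCommGroup V] [Module ℝ V]
    [FiniteDimensional ℝ V]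
    (K : Set (Finset S)) (ρ : S → V)
    (hcomplete : ∀ v : V, ∃ σ ∈ K, ∃ lam : S → ℝ,
      (∀ s, 0 ≤ lam s) ∧ v = ∑ s ∈ σ, lam s • ρ s) :
    ∃ lam : S → ℝ, (∀ s, 0 < lam s) ∧ ∑ s : S, lam s • ρ s = 0 := by
  classical
  obtain ⟨σ, -, lam, hlam, hsum⟩ := hcomplete (-(∑ s : S, ρ s))
  refine ⟨fun s => 1 + (if s ∈ σ then lam s else 0), fun s => ?_, ?_⟩
  · have : 0 ≤ (if s ∈ σ then lam s else 0) := by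
      split_ifs with h
      · exact hlam s
      · exact le_refl 0
    dsimp only; linarith
  · have h1 : ∑ s : S, (1 + (if s ∈ σ then lam s else 0)) • ρ s
        = (∑ s : S, ρ s) + ∑ s : S, (if s ∈ σ then lam s else 0) • ρ s := by
      rw [← Finset.sum_add_distrib]
      congr 1; ext s; rw [add_smul, one_smul]
    have h2 : ∑ s : S, (if s ∈ σ then lam s else 0) • ρ s = ∑ s ∈ σ, lam s • ρ s := by
      simp only [ite_smul, zero_smul]
      rw [← Finset.sum_filter, Finset.filter_mem_eq_inter, Finset.univ_inter]
    rw [h1, h2, ← hsum]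
    simp
end

section
/- Let Σ = (S, K, V, ρ) be a complete generalized fan with no ghost vertices. Then any holomorphic automorphism φ of ℂ^S that normalizes the action of the complex fan torus G_Σ is a polynomial automorphism. -/
open Complex Polynomial
open scoped NNReal

/-- One-variable: entire function with polynomial growth is a polynomial. -/
lemma entire_polygrowth_polynomial (g : ℂ → ℂ) (hg : Differentiable ℂ g) (N : ℕ) (C : ℝ)
    (hb : ∀ u : ℂ, ‖g u‖ ≤ C * (max 1 ‖u‖) ^ N) :
    ∃ q : Polynomial ℂ, q.degree < (N + 1 : ℕ) ∧ ∀ u, g u = q.eval u := by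
  have h1 : HasFPowerSeriesOnBall g (cauchyPowerSeries g 0 ((1:ℝ≥0):ℝ)) 0 ⊤ :=
    hg.hasFPowerSeriesOnBall (R := 1) 0 one_pos
  set p : FormalMultilinearSeries ℂ ℂ ℂ := cauchyPowerSeries g 0 ((1:ℝ≥0):ℝ) with hp
  -- coefficient bound for each R ≥ 1
  have hCnn : 0 ≤ C := by
    have := (norm_nonneg (g 0)).trans (hb 0)
    nlinarith [this, pow_pos (lt_of_lt_of_le one_pos (le_max_left 1 ‖(0:ℂ)‖)) N]
  have hbound : ∀ n : ℕ, ∀ R : ℝ, 1 ≤ R → ‖p n‖ ≤ C * R ^ N * (R⁻¹) ^ n := by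
    intro n R hR
    have hRpos : (0:ℝ) < R := lt_of_lt_of_le one_pos hR
    have hR0 : (0 : ℝ≥0) < ⟨R, hRpos.le⟩ := by exact_mod_cast hRpos
    have h2 : HasFPowerSeriesOnBall g (cauchyPowerSeries g 0 R) 0 ⊤ := by
      have := hg.hasFPowerSeriesOnBall (R := ⟨R, hRpos.le⟩) 0 hR0
      exact this
    have hpe : p = cauchyPowerSeries g 0 R :=
      h1.hasFPowerSeriesAt.eq_formalMultilinearSeries h2.hasFPowerSeriesAt
    rw [hpe]
    refine le_trans (norm_cauchyPowerSeries_le g 0 R n) ?_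
    have habs : |R| = R := abs_of_pos hRpos
    have hint : (∫ θ : ℝ in (0)..2 * Real.pi, ‖g (circleMap 0 R θ)‖) ≤
        (2 * Real.pi) * (C * R ^ N) := by
      have hle : ∀ θ ∈ Set.Icc (0:ℝ) (2 * Real.pi), ‖g (circleMap 0 R θ)‖ ≤ C * R ^ N := by
        intro θ _
        have hc : max 1 ‖circleMap 0 R θ‖ = R := by
          rw [show ‖circleMap 0 R θ‖ = R from by
            simp [norm_circleMap_zero, habs]]
          exact max_eq_right hR
        have h := hb (circleMap 0 R θ)
        rwa [hc] at h
      calc (∫ θ : ℝ in (0)..2 * Real.pi, ‖g (circleMap 0 R θ)‖)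
          ≤ ∫ _ : ℝ in (0)..2 * Real.pi, C * R ^ N := by
            apply intervalIntegral.integral_mono_on Real.two_pi_pos.le
            · exact ((hg.continuous.comp (continuous_circleMap 0 R)).norm).intervalIntegrable _ _
            · exact intervalIntegrable_const
            · exact hle
        _ = (2 * Real.pi) * (C * R ^ N) := by
            rw [intervalIntegral.integral_const]; simp [smul_eq_mul]
    calc ((2 * Real.pi)⁻¹ * ∫ θ : ℝ in (0)..2 * Real.pi, ‖g (circleMap 0 R θ)‖) * |R|⁻¹ ^ n
        ≤ ((2 * Real.pi)⁻¹ * ((2 * Real.pi) * (C * R ^ N))) * |R|⁻¹ ^ n := by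
          apply mul_le_mul_of_nonneg_right
          · exact mul_le_mul_of_nonneg_left hint (by positivity)
          · positivity
      _ = C * R ^ N * (R⁻¹) ^ n := by
          rw [habs]; field_simp
  -- coefficients vanish for n > N
  have hvanish : ∀ n : ℕ, N + 1 ≤ n → p n = 0 := by
    intro n hn
    have hle : ∀ R : ℝ, 1 ≤ R → ‖p n‖ ≤ C / R := by
      intro R hR
      have hRpos : (0:ℝ) < R := lt_of_lt_of_le one_pos hR
      refine (hbound n R hR).trans ?_
      have h1' : R ^ N * (R⁻¹) ^ n ≤ R⁻¹ := by
        rw [inv_pow, ← div_eq_mul_inv, div_le_iff₀ (by positivity), inv_mul_eq_div,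
          le_div_iff₀ hRpos]
        calc R ^ N * R = R ^ (N + 1) := by ring
          _ ≤ R ^ n := pow_le_pow_right₀ hR hn
      calc C * R ^ N * (R⁻¹) ^ n = C * (R ^ N * (R⁻¹) ^ n) := by ring
        _ ≤ C * R⁻¹ := mul_le_mul_of_nonneg_left h1' hCnn
        _ = C / R := by rw [div_eq_mul_inv]
    have htend : Filter.Tendsto (fun R : ℝ => C / R) Filter.atTop (nhds 0) :=
      Filter.Tendsto.div_atTop tendsto_const_nhds Filter.tendsto_id
    have : ‖p n‖ ≤ 0 := by
      refine ge_of_tendsto htend ?_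
      filter_upwards [Filter.eventually_ge_atTop (1:ℝ)] with R hR
      exact hle R hR
    have h0 : ‖p n‖ = 0 := le_antisymm this (norm_nonneg _)
    exact norm_eq_zero.mp h0
  -- build the polynomial
  refine ⟨∑ n ∈ Finset.range (N + 1), Polynomial.C (p.coeff n) * Polynomial.X ^ n, ?_, ?_⟩
  · apply lt_of_le_of_lt (Polynomial.degree_sum_le _ _)
    rw [Finset.sup_lt_iff (by exact_mod_cast WithBot.bot_lt_coe (N+1))]
    intro n hn
    exact lt_of_le_of_lt (Polynomial.degree_C_mul_X_pow_le _ _)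
      (by exact_mod_cast Finset.mem_range.mp hn)
  · intro u
    have hmem : u ∈ Metric.eball (0:ℂ) ⊤ := by simp
    have hsum := h1.hasSum (y := u) hmem
    simp only [zero_add] at hsum
    have hterm : ∀ n, (p n fun _ => u) = u ^ n • p.coeff n :=
      fun n => p.apply_eq_pow_smul_coeff
    have hfin : HasSum (fun n => p n fun _ => u)
        (∑ n ∈ Finset.range (N + 1), (p n fun _ => u)) := by
      apply hasSum_sum_of_ne_finset_zero
      intro n hn
      have : p n = 0 :=
        hvanish n (Nat.le_of_not_lt (fun h => hn (Finset.mem_range.mpr h)))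
      simp [this]
    have := hsum.unique hfin
    rw [this, Polynomial.eval_finset_sum]
    refine Finset.sum_congr rfl fun n _ => ?_
    rw [hterm n, Polynomial.eval_mul, Polynomial.eval_C, Polynomial.eval_pow,
      Polynomial.eval_X, smul_eq_mul, mul_comm]


/-- Multivariate assembly: a function polynomial of degree < N+1 along every coordinate
line is given by a multivariate polynomial. -/
lemma lines_poly_to_mvpoly {S : Type*} [Fintype S] [DecidableEq S] (N : ℕ)
    (f : (S → ℂ) → ℂ)
    (hf : ∀ (s : S) (z : S → ℂ), ∃ q : Polynomial ℂ, q.degree < (N + 1 : ℕ) ∧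
      ∀ u, f (Function.update z s u) = q.eval u) :
    ∃ p : MvPolynomial S ℂ, ∀ z, f z = MvPolynomial.eval z p := by
  classical
  set v : Fin (N + 1) → ℂ := fun j => ((j : ℕ) : ℂ) with hv
  have hinj : Set.InjOn v (Finset.univ : Finset (Fin (N+1))) := by
    intro j _ k _ h
    exact Fin.ext (Nat.cast_injective h)
  set B : Fin (N + 1) → ℂ → ℂ := fun j x => (Lagrange.basis Finset.univ v j).eval x with hB
  -- one-variable interpolation
  have OVK : ∀ g : ℂ → ℂ, (∃ q : Polynomial ℂ, q.degree < (N + 1 : ℕ) ∧ ∀ u, g u = q.eval u) →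
      ∀ x, g x = ∑ j, B j x * g (v j) := by
    rintro g ⟨q, hdeg, hq⟩ x
    have hcard : q.degree < (Finset.univ : Finset (Fin (N+1))).card := by
      simpa [Finset.card_univ] using hdeg
    have hqi := Lagrange.eq_interpolate hinj hcard
    rw [hq x]
    conv_lhs => rw [hqi]
    rw [Lagrange.interpolate_apply, Polynomial.eval_finset_sum]
    refine Finset.sum_congr rfl fun j _ => ?_
    rw [Polynomial.eval_mul, Polynomial.eval_C, hq (v j), mul_comm]
  set d : Fin (N + 1) → ℂ := fun j => if j = 0 then 1 else 0 with hd
  have hdsum : (∑ j, d j) = 1 := by simp [hd]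
  set blend : Finset S → (S → Fin (N + 1)) → (S → ℂ) → (S → ℂ) :=
    fun T k z t => if t ∈ T then v (k t) else z t with hblend
  have claim : ∀ T : Finset S, ∀ z, f z = ∑ k : S → Fin (N + 1),
      (∏ t ∈ T, B (k t) (z t)) * (∏ t ∈ Tᶜ, d (k t)) * f (blend T k z) := by
    intro T
    induction T using Finset.induction_on with
    | empty =>
      intro z
      rw [Finset.sum_eq_single (fun _ => (0 : Fin (N + 1)))]
      · have hbz : blend ∅ (fun _ => (0 : Fin (N+1))) z = z := by
          funext t; simp [hblend]
        simp [hbz, hd]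
      · intro k _ hk
        have : ∃ t, k t ≠ 0 := by
          by_contra h
          push_neg at h
          exact hk (funext h)
        obtain ⟨t, ht⟩ := this
        have hz : d (k t) = 0 := by simp [hd, ht]
        have h0 : (∏ x : S, d (k x)) = 0 := Finset.prod_eq_zero (Finset.mem_univ t) hz
        simp [Finset.compl_empty, h0]
      · intro h
        exact absurd (Finset.mem_univ _) h
    | @insert a T ha ih =>
      intro z
      -- expand in coordinate a
      have step1 : f z = ∑ j, B j (z a) * f (Function.update z a (v j)) := by
        have h := OVK (fun u => f (Function.update z a u)) (hf a z) (z a)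
        simpa [Function.update_eq_self] using h
      set F : (S → Fin (N + 1)) → ℂ := fun k =>
        (∏ t ∈ insert a T, B (k t) (z t)) * (∏ t ∈ (insert a T)ᶜ, d (k t)) *
          f (blend (insert a T) k z) with hF
      have hterm : ∀ (j : Fin (N+1)) (k : S → Fin (N+1)),
          B j (z a) * ((∏ t ∈ T, B (k t) (z t)) * (∏ t ∈ Tᶜ, d (k t)) *
            f (blend (insert a T) (Function.update k a j) z))
          = d (k a) * F (Function.update k a j) := by
        intro j k
        have h1 : (∏ t ∈ insert a T, B ((Function.update k a j) t) (z t)) =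
            B j (z a) * ∏ t ∈ T, B (k t) (z t) := by
          rw [Finset.prod_insert ha]
          congr 1
          · simp
          · refine Finset.prod_congr rfl fun t ht => ?_
            rw [Function.update_of_ne (fun h => ha (by rw [← h]; exact ht)) _ _]
        have h2 : (∏ t ∈ Tᶜ, d (k t)) =
            d (k a) * ∏ t ∈ (insert a T)ᶜ, d ((Function.update k a j) t) := by
          rw [Finset.compl_insert]
          have hac : a ∈ Tᶜ := Finset.mem_compl.mpr ha
          rw [← Finset.mul_prod_erase Tᶜ (fun t => d (k t)) hac]
          congr 1
          refine Finset.prod_congr rfl fun t ht => ?_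
          rw [Function.update_of_ne (Finset.ne_of_mem_erase ht) _ _]
        simp only [hF]
        rw [h1, h2]
        ring
      -- rewrite the blend of the update
      have hblendeq : ∀ (j : Fin (N+1)) (k : S → Fin (N+1)),
          blend T k (Function.update z a (v j)) = blend (insert a T) (Function.update k a j) z := by
        intro j k
        funext t
        by_cases htT : t ∈ T
        · have hta : t ≠ a := fun h => ha (h ▸ htT)
          simp [hblend, htT, Finset.mem_insert, hta, Function.update_of_ne hta]
        · by_cases hta : t = a
          · subst hta
            simp [hblend, htT, Function.update_self]
          · simp [hblend, htT, hta, Function.update_of_ne hta]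
      have step2 : f z = ∑ j : Fin (N+1), ∑ k : S → Fin (N+1),
          d (k a) * F (Function.update k a j) := by
        rw [step1]
        refine Finset.sum_congr rfl fun j _ => ?_
        rw [ih (Function.update z a (v j)), Finset.mul_sum]
        refine Finset.sum_congr rfl fun k _ => ?_
        have hupd : ∀ t ∈ T, (Function.update z a (v j)) t = z t := by
          intro t ht
          exact Function.update_of_ne (fun h => ha (by rw [← h]; exact ht)) _ _
        rw [show (∏ t ∈ T, B (k t) ((Function.update z a (v j)) t)) =
            ∏ t ∈ T, B (k t) (z t) from Finset.prod_congr rfl fun t ht => by rw [hupd t ht]]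
        rw [hblendeq j k]
        exact hterm j k
      -- reindex via the involution (j, k) ↦ (k a, update k a j)
      have key : (∑ j : Fin (N+1), ∑ k : S → Fin (N+1), d (k a) * F (Function.update k a j))
          = ∑ k : S → Fin (N+1), F k := by
        have hinv : Function.Involutive (fun jk : Fin (N+1) × (S → Fin (N+1)) =>
            ((jk.2 a, Function.update jk.2 a jk.1) : Fin (N+1) × (S → Fin (N+1)))) := by
          rintro ⟨j, k⟩
          simp [Function.update_idem, Function.update_self, Function.update_eq_self]
        have hb : (∑ jk : Fin (N+1) × (S → Fin (N+1)), d jk.1 * F jk.2)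
            = ∑ jk : Fin (N+1) × (S → Fin (N+1)), d (jk.2 a) * F (Function.update jk.2 a jk.1) :=
          Fintype.sum_bijective _ hinv.bijective _ _ (by
            rintro ⟨j, k⟩
            simp [Function.update_self, Function.update_idem, Function.update_eq_self])
        calc (∑ j : Fin (N+1), ∑ k : S → Fin (N+1), d (k a) * F (Function.update k a j))
            = ∑ jk : Fin (N+1) × (S → Fin (N+1)), d (jk.2 a) * F (Function.update jk.2 a jk.1) :=
              (Fintype.sum_prod_type fun jk : Fin (N+1) × (S → Fin (N+1)) => d (jk.2 a) * F (Function.update jk.2 a jk.1)).symm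
          _ = ∑ jk : Fin (N+1) × (S → Fin (N+1)), d jk.1 * F jk.2 := hb.symm
          _ = ∑ j : Fin (N+1), ∑ k : S → Fin (N+1), d j * F k :=
              Fintype.sum_prod_type fun jk : Fin (N+1) × (S → Fin (N+1)) => d jk.1 * F jk.2
          _ = (∑ j, d j) * ∑ k, F k := by rw [Finset.sum_mul_sum]
          _ = ∑ k, F k := by rw [hdsum, one_mul]
      rw [step2, key]
  -- build the multivariate polynomial
  refine ⟨∑ k : S → Fin (N + 1), MvPolynomial.C (f (fun t => v (k t))) *
      ∏ t, Polynomial.aeval (MvPolynomial.X t) (Lagrange.basis Finset.univ v (k t)), ?_⟩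
  intro z
  have heval : ∀ (q : Polynomial ℂ) (t : S),
      MvPolynomial.eval z (Polynomial.aeval (MvPolynomial.X t : MvPolynomial S ℂ) q)
        = q.eval (z t) := by
    intro q t
    have h := Polynomial.aeval_algHom_apply (MvPolynomial.aeval z) (MvPolynomial.X t) q
    rw [MvPolynomial.aeval_X] at h
    rw [show (MvPolynomial.aeval z) (Polynomial.aeval (MvPolynomial.X t) q)
        = MvPolynomial.eval z (Polynomial.aeval (MvPolynomial.X t) q) from by
          rw [MvPolynomial.aeval_def, MvPolynomial.eval]; rfl] at h
    rw [← h, Polynomial.coe_aeval_eq_eval]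
  rw [claim Finset.univ z, map_sum]
  refine Finset.sum_congr rfl fun k _ => ?_
  rw [map_mul, MvPolynomial.eval_C, map_prod]
  have hbu : blend Finset.univ k z = fun t => v (k t) := by
    funext t; simp [hblend]
  rw [hbu]
  simp only [heval]
  rw [Finset.compl_univ, Finset.prod_empty, mul_one]
  ring


/-- Let Σ = (S, K, V, ρ) be a complete generalized fan with no ghost
vertices. Any holomorphic automorphism φ of ℂ^S normalizing the action of the complex fan
torus G_Σ = exp_ℂ(ker A_Σ^ℂ) (acting diagonally on ℂ^S) is a polynomial automorphism,
i.e. each coordinate of φ is given by a polynomial. -/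
theorem normalizer_of_fan_torus_is_polynomial
    {S : Type*} [Fintype S] {ι : Type*} [Fintype ι]
    (K : Set (Finset S)) (ρ : S → ι → ℝ)
    (hnoghost : ∀ s : S, ({s} : Finset S) ∈ K)
    (hcomplete : ∀ v : ι → ℝ, ∃ σ ∈ K, ∃ lam : S → ℝ,
      (∀ s, 0 ≤ lam s) ∧ v = ∑ s ∈ σ, lam s • ρ s)
    (φ ψ : (S → ℂ) → (S → ℂ))
    (hφ : Differentiable ℂ φ) (hψ : Differentiable ℂ ψ)
    (hinv₁ : ∀ z, ψ (φ z) = z) (hinv₂ : ∀ z, φ (ψ z) = z)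
    (hnorm : (fun g : (S → ℂ) → (S → ℂ) => φ ∘ g ∘ ψ) ''
        {g | ∃ w : S → ℂ, (∀ i, ∑ s, w s * (ρ s i : ℂ) = 0) ∧
          g = fun z s => Complex.exp (w s) * z s}
      = {g | ∃ w : S → ℂ, (∀ i, ∑ s, w s * (ρ s i : ℂ) = 0) ∧
          g = fun z s => Complex.exp (w s) * z s}) :
    ∀ s : S, ∃ p : MvPolynomial S ℂ, ∀ z, φ z s = MvPolynomial.eval z p := by
  classical
  intro s
  -- Step 1: a strictly positive vector in the kernel of the weight matrix
  obtain ⟨σ, hσK, lam, hlam0, hsum⟩ := hcomplete (-(∑ t, ρ t))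
  set μ : S → ℝ := fun t => 1 + (if t ∈ σ then lam t else 0) with hμ
  have hμ1 : ∀ t, (1:ℝ) ≤ μ t := by
    intro t
    by_cases h : t ∈ σ <;> simp [hμ, h, hlam0 t]
  have hμker : ∀ i, ∑ t, μ t * ρ t i = 0 := by
    intro i
    have h := congrFun hsum i
    simp only [Pi.neg_apply, Finset.sum_apply, Pi.smul_apply, smul_eq_mul] at h
    have h2 : ∑ t, μ t * ρ t i = ∑ t, ρ t i + ∑ t ∈ σ, lam t * ρ t i := by
      simp only [hμ, add_mul, one_mul, Finset.sum_add_distrib]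
      congr 1
      calc ∑ t : S, (if t ∈ σ then lam t else 0) * ρ t i
          = ∑ t : S, (if t ∈ σ then lam t * ρ t i else 0) := by
            refine Finset.sum_congr rfl fun t _ => ?_
            split <;> simp
        _ = ∑ t ∈ Finset.univ ∩ σ, lam t * ρ t i := Finset.sum_ite_mem _ _ _
        _ = ∑ t ∈ σ, lam t * ρ t i := by rw [Finset.univ_inter]
    rw [h2, ← h]
    ring
  -- Step 2: conjugated one-parameter subgroup
  have key : ∀ τ : ℂ, ∃ w' : S → ℂ, ∀ y : S → ℂ,
      φ (fun t => Complex.exp (τ * (μ t : ℂ)) * y t) = fun t => Complex.exp (w' t) * φ y t := by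
    intro τ
    have hker : ∀ i, ∑ t, (τ * (μ t : ℂ)) * ((ρ t i : ℝ) : ℂ) = 0 := by
      intro i
      have hc := congrArg (fun x : ℝ => (x : ℂ)) (hμker i)
      push_cast at hc
      calc ∑ t, (τ * (μ t : ℂ)) * ((ρ t i : ℝ) : ℂ)
          = τ * ∑ t, (μ t : ℂ) * ((ρ t i : ℝ) : ℂ) := by
            rw [Finset.mul_sum]
            exact Finset.sum_congr rfl fun t _ => by ring
        _ = τ * 0 := by rw [hc]
        _ = 0 := mul_zero τ
    have hmem : (fun z (t : S) => Complex.exp (τ * (μ t : ℂ)) * z t) ∈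
        {g : (S → ℂ) → (S → ℂ) | ∃ w : S → ℂ, (∀ i, ∑ t, w t * (ρ t i : ℂ) = 0) ∧
          g = fun z t => Complex.exp (w t) * z t} :=
      ⟨fun t => τ * (μ t : ℂ), hker, rfl⟩
    have himg := Set.mem_image_of_mem (fun g : (S → ℂ) → (S → ℂ) => φ ∘ g ∘ ψ) hmem
    rw [hnorm] at himg
    obtain ⟨w', _, hw'eq⟩ := himg
    refine ⟨w', fun y => ?_⟩
    have h := congrFun hw'eq (φ y)
    simp only [Function.comp_apply] at h
    rw [hinv₁ y] at h
    exact h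
  -- the coordinate function
  set f : (S → ℂ) → ℂ := fun z => φ z s with hfdef
  have hfd : Differentiable ℂ f := (((differentiable_pi (Φ := fun z : S → ℂ => z)).mp differentiable_id) s).comp hφ
  by_cases hnz : ∃ y₀, f y₀ ≠ 0
  swap
  · push_neg at hnz
    exact ⟨0, fun z => by rw [map_zero]; exact hnz z⟩
  obtain ⟨y₀, hy₀⟩ := hnz
  choose W hW using key
  have rel : ∀ (τ : ℂ) (y : S → ℂ),
      f (fun t => Complex.exp (τ * (μ t : ℂ)) * y t) = Complex.exp (W τ s) * f y :=
    fun τ y => congrFun (hW τ y) s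
  set L : ℂ → ℂ := fun τ => f (fun t => Complex.exp (τ * (μ t : ℂ)) * y₀ t) * (f y₀)⁻¹ with hLdef
  have hLexp : ∀ τ, L τ = Complex.exp (W τ s) := by
    intro τ
    rw [hLdef]
    simp only []
    rw [rel τ y₀]
    field_simp
  have relL : ∀ (τ : ℂ) (y : S → ℂ),
      f (fun t => Complex.exp (τ * (μ t : ℂ)) * y t) = L τ * f y := by
    intro τ y
    rw [hLexp τ]
    exact rel τ y
  have hL1 : L 0 = 1 := by
    have h := relL 0 y₀
    have he : (fun t => Complex.exp (0 * (μ t : ℂ)) * y₀ t) = y₀ := by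
      funext t; simp
    rw [he] at h
    have := mul_right_cancel₀ hy₀ (show (1 : ℂ) * f y₀ = L 0 * f y₀ by rw [one_mul, ← h])
    exact this.symm
  have hLd : Differentiable ℂ L := by
    apply Differentiable.mul_const
    apply hfd.comp
    apply differentiable_pi.mpr
    intro t
    exact ((differentiable_id.mul_const ((μ t : ℂ))).cexp).mul_const (y₀ t)
  have hmul : ∀ τ ς : ℂ, L (τ + ς) = L τ * L ς := by
    intro τ ς
    have h1 := relL (τ + ς) y₀
    have h2 : (fun t => Complex.exp ((τ + ς) * (μ t : ℂ)) * y₀ t)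
        = fun t => Complex.exp (τ * (μ t : ℂ)) *
            ((fun t' => Complex.exp (ς * (μ t' : ℂ)) * y₀ t') t) := by
      funext t
      simp only []
      rw [← mul_assoc, ← Complex.exp_add]
      congr 2
      ring
    rw [h2, relL τ, relL ς] at h1
    apply mul_right_cancel₀ hy₀
    rw [← h1]; ring
  set c := deriv L 0 with hc
  have hder : ∀ τ, HasDerivAt L (L τ * c) τ := by
    intro τ
    have h0 : HasDerivAt L c 0 := (hLd 0).hasDerivAt
    have hA1 : HasDerivAt (fun ς => L τ * L ς) (L τ * c) 0 := h0.const_mul (L τ)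
    have hA2 : HasDerivAt (fun ς => L (τ + ς)) (L τ * c) 0 := by
      have heq : (fun ς => L (τ + ς)) = fun ς => L τ * L ς := funext fun ς => hmul τ ς
      rw [heq]; exact hA1
    have hshift : HasDerivAt (fun x : ℂ => x - τ) 1 τ := by
      simpa using (hasDerivAt_id τ).sub_const τ
    have hcomp : HasDerivAt ((fun ς => L (τ + ς)) ∘ (fun x : ℂ => x - τ)) (L τ * c * 1) τ := by
      apply HasDerivAt.comp
      · simpa using hA2
      · exact hshift
    have hLeq : ((fun ς => L (τ + ς)) ∘ (fun x : ℂ => x - τ)) = L := by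
      funext x
      simp [Function.comp, add_sub_cancel]
    rw [hLeq, mul_one] at hcomp
    exact hcomp
  have hLform : ∀ τ, L τ = Complex.exp (c * τ) := by
    have hg : ∀ τ : ℂ, HasDerivAt (fun x => L x * Complex.exp (-(c * x))) 0 τ := by
      intro τ
      have h1 : HasDerivAt (fun x : ℂ => -(c * x)) (-(c * 1)) τ :=
        ((hasDerivAt_id τ).const_mul c).neg
      have he : HasDerivAt (fun x : ℂ => Complex.exp (-(c * x)))
          (Complex.exp (-(c * τ)) * -(c * 1)) τ := h1.cexp
      have h := (hder τ).mul he
      rw [show L τ * c * Complex.exp (-(c * τ)) + L τ * (Complex.exp (-(c * τ)) * -(c * 1)) = 0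
        from by ring] at h
      exact h
    have hconst : ∀ τ : ℂ, L τ * Complex.exp (-(c * τ)) = L 0 * Complex.exp (-(c * 0)) :=
      fun τ => is_const_of_deriv_eq_zero (fun x => (hg x).differentiableAt)
        (fun x => (hg x).deriv) τ 0
    intro τ
    have h := hconst τ
    rw [hL1, one_mul, mul_zero, neg_zero, Complex.exp_zero] at h
    calc L τ = L τ * (Complex.exp (-(c * τ)) * Complex.exp (c * τ)) := by
          rw [← Complex.exp_add, neg_add_cancel, Complex.exp_zero, mul_one]
      _ = (L τ * Complex.exp (-(c * τ))) * Complex.exp (c * τ) := by ring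
      _ = Complex.exp (c * τ) := by rw [h, one_mul]
  -- Step 3: polynomial growth
  have hcomp : IsCompact (Metric.closedBall (0 : S → ℂ) 1) := isCompact_closedBall 0 1
  obtain ⟨M, hM⟩ := hcomp.exists_bound_of_continuousOn hfd.continuous.continuousOn
  have hM0 : 0 ≤ M := le_trans (norm_nonneg _) (hM 0 (by simp))
  set N := ⌈c.re⌉₊ with hN
  have growth : ∀ z : S → ℂ, ‖f z‖ ≤ M * (max 1 ‖z‖) ^ N := by
    intro z
    set R : ℝ := max 1 ‖z‖ with hR
    have hR1 : (1:ℝ) ≤ R := le_max_left _ _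
    have hRpos : (0:ℝ) < R := lt_of_lt_of_le one_pos hR1
    have hlog : (0:ℝ) ≤ Real.log R := Real.log_nonneg hR1
    set τ : ℂ := ((Real.log R : ℝ) : ℂ) with hτ
    set y : S → ℂ := fun t => Complex.exp (-τ * (μ t : ℂ)) * z t with hy
    have hzy : (fun t => Complex.exp (τ * (μ t : ℂ)) * y t) = z := by
      funext t
      simp only [hy]
      rw [← mul_assoc, ← Complex.exp_add,
        show τ * (μ t : ℂ) + -τ * (μ t : ℂ) = 0 from by ring, Complex.exp_zero, one_mul]
    have hfz : f z = Complex.exp (c * τ) * f y := by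
      conv_lhs => rw [← hzy]
      rw [relL τ y, hLform τ]
    have hynorm : y ∈ Metric.closedBall (0 : S → ℂ) 1 := by
      rw [Metric.mem_closedBall, dist_zero_right]
      refine (pi_norm_le_iff_of_nonneg zero_le_one).mpr fun t => ?_
      simp only [hy]
      rw [norm_mul]
      have h1 : ‖Complex.exp (-τ * (μ t : ℂ))‖ = Real.exp (-(Real.log R) * μ t) := by
        rw [Complex.norm_exp]
        congr 1
        rw [hτ, ← Complex.ofReal_neg, ← Complex.ofReal_mul, Complex.ofReal_re]
      have h2 : Real.exp (-(Real.log R) * μ t) ≤ R⁻¹ := by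
        have ha : -(Real.log R) * μ t ≤ -(Real.log R) := by nlinarith [hμ1 t]
        calc Real.exp (-(Real.log R) * μ t) ≤ Real.exp (-(Real.log R)) := Real.exp_le_exp.mpr ha
          _ = R⁻¹ := by rw [Real.exp_neg, Real.exp_log hRpos]
      have h3 : ‖z t‖ ≤ R := le_trans (norm_le_pi_norm z t) (le_max_right _ _)
      calc ‖Complex.exp (-τ * (μ t : ℂ))‖ * ‖z t‖ ≤ R⁻¹ * R := by
            apply mul_le_mul (h1 ▸ h2) h3 (norm_nonneg _) (by positivity)
        _ = 1 := inv_mul_cancel₀ hRpos.ne'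
    have hMy : ‖f y‖ ≤ M := hM y hynorm
    rw [hfz, norm_mul]
    have habs : ‖Complex.exp (c * τ)‖ = Real.exp (c.re * Real.log R) := by
      rw [Complex.norm_exp]
      congr 1
      rw [hτ]
      simp [Complex.mul_re]
    have hrpow : Real.exp (c.re * Real.log R) ≤ R ^ N := by
      have h1 : Real.exp (c.re * Real.log R) = R ^ c.re := by
        rw [Real.rpow_def_of_pos hRpos, mul_comm]
      rw [h1]
      have h2 : R ^ c.re ≤ R ^ (N : ℝ) := Real.rpow_le_rpow_of_exponent_le hR1 (Nat.le_ceil _)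
      rwa [Real.rpow_natCast] at h2
    calc ‖Complex.exp (c * τ)‖ * ‖f y‖ ≤ R ^ N * M := by
          apply mul_le_mul (habs ▸ hrpow) hMy (norm_nonneg _) (by positivity)
      _ = M * R ^ N := mul_comm _ _
  -- Step 4: restriction to coordinate lines and assembly
  have hlines : ∀ (t : S) (z : S → ℂ), ∃ q : Polynomial ℂ, q.degree < (N + 1 : ℕ) ∧
      ∀ u, f (Function.update z t u) = q.eval u := by
    intro t z
    apply entire_polygrowth_polynomial (fun u => f (Function.update z t u))
      (by
        apply hfd.comp
        apply differentiable_pi.mpr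
        intro t'
        have hupd : (fun u : ℂ => Function.update z t u t')
            = fun u : ℂ => if t' = t then u else z t' := by
          funext u
          rw [Function.update_apply]
        rw [hupd]
        split
        · exact differentiable_id
        · exact differentiable_const _)
      N (M * (max 1 ‖z‖) ^ N)
    intro u
    refine le_trans (growth _) ?_
    have h1 : ‖Function.update z t u‖ ≤ max ‖z‖ ‖u‖ := by
      refine (pi_norm_le_iff_of_nonneg (le_max_of_le_left (norm_nonneg z))).mpr fun t' => ?_
      rw [Function.update_apply]
      split
      · exact le_max_right _ _
      · exact le_max_of_le_left (norm_le_pi_norm z t')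
    have h2 : max 1 ‖Function.update z t u‖ ≤ (max 1 ‖z‖) * (max 1 ‖u‖) := by
      refine le_trans (max_le_max le_rfl h1) ?_
      apply max_le
      · nlinarith [le_max_left (1:ℝ) ‖z‖, le_max_left (1:ℝ) ‖u‖]
      · apply max_le
        · calc ‖z‖ ≤ max 1 ‖z‖ := le_max_right _ _
            _ = (max 1 ‖z‖) * 1 := (mul_one _).symm
            _ ≤ (max 1 ‖z‖) * (max 1 ‖u‖) := by
                apply mul_le_mul_of_nonneg_left (le_max_left _ _) (by positivity)
        · calc ‖u‖ ≤ max 1 ‖u‖ := le_max_right _ _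
            _ = 1 * (max 1 ‖u‖) := (one_mul _).symm
            _ ≤ (max 1 ‖z‖) * (max 1 ‖u‖) := by
                apply mul_le_mul_of_nonneg_right (le_max_left _ _) (by positivity)
    calc M * (max 1 ‖Function.update z t u‖) ^ N ≤ M * ((max 1 ‖z‖) * (max 1 ‖u‖)) ^ N := by
          apply mul_le_mul_of_nonneg_left (pow_le_pow_left₀ (by positivity) h2 N) hM0
      _ = (M * (max 1 ‖z‖) ^ N) * (max 1 ‖u‖) ^ N := by rw [mul_pow]; ring
  obtain ⟨p, hp⟩ := lines_poly_to_mvpoly N f hlines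
  exact ⟨p, fun z => hp z⟩
end

section
/- Let Σ = (S, K, V, ρ) be a generalized fan and m a geometric Demazure root attached to s ∈ S. Then the one-parameter transformation y_m(λ) of ℂ^S preserves the Cox construction U(Σ) for all λ ∈ ℂ. Conversely, if m is a Demazure root that is not geometric, then some y_m(λ) maps a point of U(Σ) outside of U(Σ). -/
/-- The Cox construction U(Σ) = ⋃_{σ ∈ K} {z ∈ ℂ^S : z_s ≠ 0 for s ∉ σ}. -/
def coxU {S : Type*} (K : Set (Finset S)) : Set (S → ℂ) :=
  {z | ∃ σ ∈ K, ∀ s ∉ σ, z s ≠ 0}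

/-- The one-parameter transformation y_m(λ) of ℂ^S attached to a Demazure root m with
distinguished vertex s₀ and exponents a s' = ⟨−m, ρ(s')⟩ ∈ ℕ for s' ≠ s₀. -/
def ym {S : Type*} [Fintype S] [DecidableEq S] (s₀ : S) (a : S → ℕ) (lam : ℂ)
    (z : S → ℂ) : S → ℂ :=
  Function.update z s₀ (z s₀ + lam * ∏ s' ∈ Finset.univ.erase s₀, z s' ^ a s')

/-- For a Demazure root m of Σ = (S, K, V, ρ) attached to s₀
(⟨m, ρ(s₀)⟩ = 1, ⟨m, ρ(s')⟩ = −(a s') ≤ 0 for s' ≠ s₀), the transformations y_m(λ) all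
preserve the Cox construction U(Σ) if and only if m is geometric, i.e. for every face
σ ∈ K there is a face τ ∈ K containing s₀ and σ_m = {s' ∈ σ : ⟨m, ρ(s')⟩ = 0}. -/
theorem ym_preserves_cox_iff_geometric
    {S : Type*} [Fintype S] [DecidableEq S] {ι : Type*} [Fintype ι]
    (K : Set (Finset S)) (ρ : S → ι → ℝ) (m : ι → ℝ) (s₀ : S) (a : S → ℕ)
    (hm1 : ∑ i, m i * ρ s₀ i = 1)
    (ha : ∀ s', s' ≠ s₀ → (a s' : ℝ) = -∑ i, m i * ρ s' i) :
    (∀ σ ∈ K, ∃ τ ∈ K, s₀ ∈ τ ∧ ∀ s' ∈ σ, s' ≠ s₀ → a s' = 0 → s' ∈ τ) ↔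
      (∀ (lam : ℂ) (z : S → ℂ), z ∈ coxU K → ym s₀ a lam z ∈ coxU K) := by
  classical
  constructor
  · rintro hgeo lam z ⟨σ, hσ, hz⟩
    by_cases hcase : ∃ s', s' ≠ s₀ ∧ z s' = 0 ∧ a s' ≠ 0
    · obtain ⟨s', hs', hz', ha'⟩ := hcase
      have hprod : ∏ t ∈ Finset.univ.erase s₀, z t ^ a t = 0 := by
        apply Finset.prod_eq_zero (Finset.mem_erase.mpr ⟨hs', Finset.mem_univ _⟩)
        simp [hz', zero_pow ha']
      have hym : ym s₀ a lam z = z := by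
        unfold ym; rw [hprod]; simp
      exact ⟨σ, hσ, fun s hs => by rw [hym]; exact hz s hs⟩
    · push_neg at hcase
      obtain ⟨τ, hτ, hs₀τ, hτ2⟩ := hgeo σ hσ
      refine ⟨τ, hτ, ?_⟩
      intro s hs
      have hss : s ≠ s₀ := fun h => hs (h ▸ hs₀τ)
      unfold ym
      rw [Function.update_of_ne hss]
      intro hz0
      have haz : a s = 0 := hcase s hss hz0
      by_cases hsσ : s ∈ σ
      · exact hs (hτ2 s hsσ hss haz)
      · exact hz s hsσ hz0
  · intro hpres σ hσ
    set z : S → ℂ := fun s => if s ∈ σ ∧ s ≠ s₀ ∧ a s = 0 then 0 else 1 with hzdef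
    have hzU : z ∈ coxU K := by
      refine ⟨σ, hσ, fun s hs => ?_⟩
      simp only [hzdef]
      simp [hs]
    have hprod : ∏ t ∈ Finset.univ.erase s₀, z t ^ a t = 1 := by
      apply Finset.prod_eq_one
      intro t _
      by_cases h : t ∈ σ ∧ t ≠ s₀ ∧ a t = 0
      · simp [hzdef, h, h.2.2]
      · simp [hzdef, h]
    obtain ⟨τ, hτ, hw⟩ := hpres (-1) z hzU
    refine ⟨τ, hτ, ?_, ?_⟩
    · by_contra hs₀
      apply hw s₀ hs₀
      unfold ym
      rw [Function.update_self, hprod]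
      have : z s₀ = 1 := by simp [hzdef]
      rw [this]; ring
    · intro s' hs' hne haz
      by_contra hsτ
      apply hw s' hsτ
      unfold ym
      rw [Function.update_of_ne hne]
      simp [hzdef, hs', hne, haz]
end

section
/- Let Σ be a complete generalized fan associated to an embedded complete simplicial fan in V, and let A : V → W be any linear operator. Then the pushforward generalized fan A_*Σ is strongly complete. -/
/-- The cone of a face σ of a generalized fan: non-negative combinations of the ρ(s), s ∈ σ. -/
def fanCone {S : Type*} [Fintype S] {V : Type*} [AddCommGroup V] [Module ℝ V]
    (ρ : S → V) (σ : Finset S) : Set V :=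
  {v | ∃ lam : S → ℝ, (∀ s, 0 ≤ lam s) ∧ v = ∑ s ∈ σ, lam s • ρ s}

/-- Let Σ be the generalized fan of an embedded complete simplicial fan in V
(K downward closed, generators of each face linearly independent — hence the cones are
strongly convex and simplicial —, pairwise intersections of cones are the cones of the
intersections of the faces, and the cones cover V), and let A : V → W be any linear map.
Then the pushforward A_*Σ is strongly complete. -/
theorem pushforward_of_embedded_complete_is_strongly_complete
    {S : Type*} [Fintype S] [DecidableEq S]
    {V W : Type*} [AddCommGroup V] [Module ℝ V] [FiniteDimensional ℝ V]
    [AddCommGroup W] [Module ℝ W]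
    (K : Set (Finset S)) (ρ : S → V)
    (hdown : ∀ σ ∈ K, ∀ τ, τ ⊆ σ → τ ∈ K)
    (hsimplicial : ∀ σ ∈ K, LinearIndependent ℝ (fun s : {x // x ∈ σ} => ρ s))
    (hfaces : ∀ σ ∈ K, ∀ τ ∈ K, fanCone ρ σ ∩ fanCone ρ τ = fanCone ρ (σ ∩ τ))
    (hcomplete : ∀ v : V, ∃ σ ∈ K, v ∈ fanCone ρ σ)
    (A : V →ₗ[ℝ] W) :
    ∀ (m : Module.Dual ℝ W) (s : S), 0 < m (A (ρ s)) →
      (∀ s', 0 < m (A (ρ s')) → s' = s) →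
      ∀ σ ∈ K, s ∉ σ → ∃ τ ∈ K, s ∈ τ ∧ ∀ s' ∈ σ, m (A (ρ s')) = 0 → s' ∈ τ := by
  classical
  intro m s hs huniq σ hσK hsσ
  set f : S → ℝ := fun s' => m (A (ρ s')) with hf
  set σ₀ : Finset S := σ.filter (fun s' => f s' = 0) with hσ₀def
  have hσ₀K : σ₀ ∈ K := hdown σ hσK σ₀ (Finset.filter_subset _ _)
  set x : V := ∑ s' ∈ σ₀, ρ s' with hxdef
  set tn : ℕ → ℝ := fun n => 1 / (n + 1) with htn
  have htnpos : ∀ n, 0 < tn n := fun n => by positivity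
  have htninj : Function.Injective tn := by
    intro a b hab
    have h : ((a:ℝ)+1)⁻¹ = ((b:ℝ)+1)⁻¹ := by simpa [htn, one_div] using hab
    have h2 : (a:ℝ) + 1 = (b:ℝ) + 1 := inv_inj.mp h
    have h3 : (a:ℝ) = (b:ℝ) := by linarith
    exact_mod_cast h3
  have hpt : ∀ n : ℕ, ∃ τ ∈ K, x + tn n • ρ s ∈ fanCone ρ τ := fun n => hcomplete _
  choose g hgK hgmem using hpt
  obtain ⟨τ, hτinf'⟩ := Finite.exists_infinite_fiber g
  have hτinf : (g ⁻¹' {τ}).Infinite := Set.infinite_coe_iff.mp hτinf'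
  have hτK : τ ∈ K := by
    obtain ⟨n, hn⟩ := hτinf.nonempty
    simpa [Set.mem_preimage, Set.mem_singleton_iff.mp hn] using hgK n
  have hmem : ∀ n ∈ g ⁻¹' {τ}, x + tn n • ρ s ∈ fanCone ρ τ := by
    intro n hn
    have : g n = τ := hn
    rw [← this]; exact hgmem n
  -- coefficients
  have hc : ∀ n ∈ g ⁻¹' {τ}, ∃ c : S → ℝ, (∀ s', 0 ≤ c s') ∧
      x + tn n • ρ s = ∑ s' ∈ τ, c s' • ρ s' := fun n hn => hmem n hn
  obtain ⟨n₁, hn₁⟩ := hτinf.nonempty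
  obtain ⟨n₂, hn₂, hn₁₂⟩ := hτinf.exists_gt n₁
  obtain ⟨c₁, hc₁nn, hc₁⟩ := hc n₁ hn₁
  obtain ⟨c₂, hc₂nn, hc₂⟩ := hc n₂ hn₂
  have htne : tn n₁ ≠ tn n₂ := fun h => (ne_of_gt hn₁₂) (htninj h).symm
  set b : S → ℝ := fun s' => (c₁ s' - c₂ s') / (tn n₁ - tn n₂) with hbdef
  have hρs : ρ s = ∑ s' ∈ τ, b s' • ρ s' := by
    have h1 : (tn n₁ - tn n₂) • ρ s = ∑ s' ∈ τ, (c₁ s' - c₂ s') • ρ s' := by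
      rw [Finset.sum_congr rfl (fun s' _ => sub_smul (c₁ s') (c₂ s') (ρ s')),
        Finset.sum_sub_distrib, ← hc₁, ← hc₂]
      module
    have hne : tn n₁ - tn n₂ ≠ 0 := sub_ne_zero.mpr htne
    calc ρ s = (tn n₁ - tn n₂)⁻¹ • ((tn n₁ - tn n₂) • ρ s) := by
          rw [smul_smul, inv_mul_cancel₀ hne, one_smul]
      _ = ∑ s' ∈ τ, b s' • ρ s' := by
          rw [h1, Finset.smul_sum]
          refine Finset.sum_congr rfl fun s' _ => ?_
          rw [smul_smul, hbdef]
          congr 1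
          field_simp
  set a : S → ℝ := fun s' => c₁ s' - tn n₁ * b s' with hadef
  have hxa : x = ∑ s' ∈ τ, a s' • ρ s' := by
    have h2 : ∑ s' ∈ τ, a s' • ρ s'
        = (∑ s' ∈ τ, c₁ s' • ρ s') - tn n₁ • ∑ s' ∈ τ, b s' • ρ s' := by
      rw [Finset.smul_sum, ← Finset.sum_sub_distrib]
      exact Finset.sum_congr rfl fun s' _ => by rw [hadef]; module
    rw [h2, ← hρs, ← hc₁]
    abel
  -- uniqueness of coefficients over τ
  have hliτ := hsimplicial τ hτK
  have huniq_coef : ∀ u w : S → ℝ, (∑ s' ∈ τ, u s' • ρ s') = (∑ s' ∈ τ, w s' • ρ s') →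
      ∀ s' ∈ τ, u s' = w s' := by
    intro u w huw s' hs'
    have e1 : ∑ i ∈ τ.attach, (u ↑i - w ↑i) • ρ ↑i = ∑ y ∈ τ, (u y - w y) • ρ y :=
      Finset.sum_attach τ (fun y => (u y - w y) • ρ y)
    have hz : ∑ i : {y // y ∈ τ}, (u i - w i) • ρ (i : S) = 0 := by
      rw [Finset.univ_eq_attach, e1]
      simp only [sub_smul]
      rw [Finset.sum_sub_distrib, huw, sub_self]
    have := (Fintype.linearIndependent_iff.mp hliτ) (fun i => u i - w i) hz ⟨s', hs'⟩
    simpa [sub_eq_zero] using this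
  -- coefficients of x + tn n • ρ s for n in the fiber are a + tn n * b
  have hcoef : ∀ n ∈ g ⁻¹' {τ}, ∀ s' ∈ τ, ∃ c : S → ℝ, (∀ y, 0 ≤ c y) ∧
      c s' = a s' + tn n * b s' := by
    intro n hn s' hs'
    obtain ⟨c, hcnn, hceq⟩ := hc n hn
    refine ⟨c, hcnn, ?_⟩
    have : x + tn n • ρ s = ∑ y ∈ τ, (a y + tn n * b y) • ρ y := by
      rw [hxa, hρs, Finset.smul_sum, ← Finset.sum_add_distrib]
      refine Finset.sum_congr rfl fun y _ => ?_
      rw [add_smul, smul_smul]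
    exact huniq_coef c (fun y => a y + tn n * b y) (by rw [← hceq, this]) s' hs'
  have hann : ∀ s' ∈ τ, 0 ≤ a s' := by
    intro s' hs'
    by_contra hneg
    push_neg at hneg
    -- a s' + tn n * b s' ≥ 0 for all n in fiber, tn n arbitrarily small
    have hb : ∀ n ∈ g ⁻¹' {τ}, 0 ≤ a s' + tn n * b s' := by
      intro n hn
      obtain ⟨c, hcnn, hceq⟩ := hcoef n hn s' hs'
      rw [← hceq]; exact hcnn s'
    have hbpos : 0 < b s' := by
      have := hb n₁ hn₁
      nlinarith [htnpos n₁]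
    obtain ⟨k, hk⟩ := exists_nat_gt (b s' / (-(a s')) )
    obtain ⟨n, hn, hkn⟩ := hτinf.exists_gt k
    have h1 : tn n < -(a s') / b s' := by
      rw [htn, div_lt_div_iff₀ (by positivity) hbpos]
      have hkk : b s' / (-(a s')) < (n:ℝ) + 1 := by
        have : (k:ℝ) < (n:ℝ) + 1 := by exact_mod_cast Nat.lt_succ_of_lt hkn
        linarith
      rw [div_lt_iff₀ (by linarith)] at hkk
      nlinarith
    have h3 := hb n hn
    rw [lt_div_iff₀ hbpos] at h1
    nlinarith
  -- x ∈ fanCone ρ τ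
  have hxτ : x ∈ fanCone ρ τ := by
    refine ⟨fun y => if y ∈ τ then a y else 0, fun y => ?_, ?_⟩
    · show 0 ≤ if y ∈ τ then a y else 0
      split
      · exact hann y ‹_›
      · exact le_refl 0
    · rw [hxa]
      refine Finset.sum_congr rfl fun y hy => ?_
      show a y • ρ y = (if y ∈ τ then a y else 0) • ρ y
      rw [if_pos hy]
  have hxσ₀ : x ∈ fanCone ρ σ₀ := ⟨fun _ => 1, fun _ => zero_le_one, by simp [hxdef]⟩
  have hxint : x ∈ fanCone ρ (τ ∩ σ₀) := by
    rw [← hfaces τ hτK σ₀ hσ₀K]; exact ⟨hxτ, hxσ₀⟩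
  -- σ₀ ⊆ τ
  have hσ₀τ : σ₀ ⊆ τ := by
    obtain ⟨μ, hμnn, hμ⟩ := hxint
    intro s₁ hs₁
    by_contra hs₁τ
    -- two representations of x over σ₀
    have hliσ₀ := hsimplicial σ₀ hσ₀K
    have huniq₀ : ∀ u w : S → ℝ, (∑ s' ∈ σ₀, u s' • ρ s') = (∑ s' ∈ σ₀, w s' • ρ s') →
        ∀ s' ∈ σ₀, u s' = w s' := by
      intro u w huw s' hs'
      have e1 : ∑ i ∈ σ₀.attach, (u ↑i - w ↑i) • ρ ↑i = ∑ y ∈ σ₀, (u y - w y) • ρ y :=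
        Finset.sum_attach σ₀ (fun y => (u y - w y) • ρ y)
      have hz : ∑ i : {y // y ∈ σ₀}, (u i - w i) • ρ (i : S) = 0 := by
        rw [Finset.univ_eq_attach, e1]
        simp only [sub_smul]
        rw [Finset.sum_sub_distrib, huw, sub_self]
      have := (Fintype.linearIndependent_iff.mp hliσ₀) (fun i => u i - w i) hz ⟨s', hs'⟩
      simpa [sub_eq_zero] using this
    have hrep : ∑ s' ∈ σ₀, (1:ℝ) • ρ s' = ∑ s' ∈ σ₀, (if s' ∈ τ then μ s' else 0) • ρ s' := by
      have h1 : ∑ s' ∈ σ₀, (1:ℝ) • ρ s' = x := by simp [hxdef]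
      rw [h1, hμ]
      have h2 : ∀ s' ∈ σ₀, (if s' ∈ τ then μ s' else 0) • ρ s'
          = (if s' ∈ τ then μ s' • ρ s' else 0) := by
        intro s' _
        split <;> simp
      rw [Finset.sum_congr rfl h2, Finset.sum_ite_mem, Finset.inter_comm]
    have := huniq₀ (fun _ => 1) (fun s' => if s' ∈ τ then μ s' else 0) hrep s₁ hs₁
    simp only [if_neg hs₁τ] at this
    exact one_ne_zero this
  -- s ∈ τ
  have hsτ : s ∈ τ := by
    have hfx : m (A x) = 0 := by
      rw [hxdef, map_sum, map_sum]
      refine Finset.sum_eq_zero fun s' hs' => ?_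
      exact (Finset.mem_filter.mp hs').2
    have hsum : ∑ s' ∈ τ, c₁ s' * f s' = tn n₁ * f s := by
      have := congrArg (fun v => m (A v)) hc₁
      simp only [map_add, map_smul, map_sum, smul_eq_mul] at this
      rw [hfx] at this
      rw [← this]; ring
    have hpos : 0 < ∑ s' ∈ τ, c₁ s' * f s' := by
      rw [hsum]; exact mul_pos (htnpos n₁) hs
    obtain ⟨s', hs', hspos⟩ : ∃ s' ∈ τ, 0 < c₁ s' * f s' := by
      by_contra h
      push_neg at h
      exact absurd (Finset.sum_nonpos h) (not_le.mpr hpos)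
    have hfs' : 0 < f s' := by
      rcases lt_or_ge 0 (f s') with h | h
      · exact h
      · nlinarith [hc₁nn s']
    have := huniq s' hfs'
    rwa [← this]
  exact ⟨τ, hτK, hsτ, fun s' hs'σ hfs' => hσ₀τ (Finset.mem_filter.mpr ⟨hs'σ, hfs'⟩)⟩
end
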